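/- (Proposition S5: generalization of the g-loss minimizer under covariate shift.) Let 𝒳 be a standard Borel space, κ a Markov kernel from 𝒳 to ℝ (the common conditional outcome distribution), ν a probability measure on ℝ, and let μ and μ' be probability measures on 𝒳 (training and evaluation covariate distributions) with μ' absolutely continuous with respect to μ. For a probability measure m on 𝒳, define the loss L_m(g) = ∫_𝒳 ∫_ℝ ∫_ℝ ℓ(1_{y ≤ z}, g(z, x)) dκ(x)(y) dν(z) dm(x) for jointly measurable g : ℝ × 𝒳 → (0,1). If g minimizes L_μ over all jointly measurable (0,1)-valued functions, then g also minimizes L_{μ'} over all such functions; i.e. the optimum learned on the training covariate space generalizes to any evaluation covariate space whose support is covered by the training space, provided the conditional outcome distribution is invariant (covariate shift). -/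

import Mathlib

open MeasureTheory ProbabilityTheory
open scoped ENNReal

/-- Binary cross-entropy loss `ℓ(t, p) = −(t·log p + (1 − t)·log(1 − p))`. -/
noncomputable def bce (t p : ℝ) : ℝ := -(t * Real.log p + (1 - t) * Real.log (1 - p))

/-- The g-loss `L_m(g) = ∫∫∫ ℓ(1_{y ≤ z}, g(z, x)) dκ(x)(y) dν(z) dm(x)` for a covariate
distribution `m`, conditional-outcome kernel `κ` and searching distribution `ν`. -/
noncomputable def kernelGLoss {𝓧 : Type*} [MeasurableSpace 𝓧]
    (κ : ProbabilityTheory.Kernel 𝓧 ℝ) (ν : Measure ℝ) (m : Measure 𝓧)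
    (g : ℝ × 𝓧 → ℝ) : ℝ≥0∞ :=
  ∫⁻ x, ∫⁻ z, ∫⁻ y, ENNReal.ofReal (bce (if y ≤ z then 1 else 0) (g (z, x))) ∂(κ x) ∂ν ∂m

noncomputable def Fg {𝓧 : Type*} [MeasurableSpace 𝓧]
    (κ : ProbabilityTheory.Kernel 𝓧 ℝ) (ν : Measure ℝ) (g : ℝ × 𝓧 → ℝ) (x : 𝓧) : ℝ≥0∞ :=
  ∫⁻ z, ∫⁻ y, ENNReal.ofReal (bce (if y ≤ z then 1 else 0) (g (z, x))) ∂(κ x) ∂ν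

lemma measurable_bce : Measurable fun q : ℝ × ℝ => bce q.1 q.2 := by
  unfold bce
  exact (((measurable_fst.mul (Real.measurable_log.comp measurable_snd)).add
    ((measurable_const.sub measurable_fst).mul
      (Real.measurable_log.comp (measurable_const.sub measurable_snd)))).neg)

lemma measurable_Fg {𝓧 : Type*} [MeasurableSpace 𝓧]
    (κ : ProbabilityTheory.Kernel 𝓧 ℝ) [ProbabilityTheory.IsSFiniteKernel κ]
    (ν : Measure ℝ) [SFinite ν] {g : ℝ × 𝓧 → ℝ} (hg : Measurable g) :
    Measurable (Fg κ ν g) := by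
  have hc : Measurable fun q : (𝓧 × ℝ) × ℝ =>
      ENNReal.ofReal (bce (if q.2 ≤ q.1.2 then 1 else 0) (g (q.1.2, q.1.1))) := by
    apply ENNReal.measurable_ofReal.comp
    exact measurable_bce.comp
      ((Measurable.ite (measurableSet_le measurable_snd measurable_fst.snd)
        measurable_const measurable_const).prodMk
       (hg.comp (measurable_fst.snd.prodMk measurable_fst.fst)))
  have hφ : Measurable fun p : 𝓧 × ℝ =>
      ∫⁻ y, ENNReal.ofReal (bce (if y ≤ p.2 then 1 else 0) (g (p.2, p.1))) ∂(κ p.1) := by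
    have := (Measurable.lintegral_kernel_prod_right (κ := κ.prodMkRight ℝ)
      (f := fun p y => ENNReal.ofReal (bce (if y ≤ p.2 then 1 else 0) (g (p.2, p.1))))
      (by exact hc))
    simpa [Kernel.prodMkRight_apply] using this
  exact hφ.lintegral_prod_right'

lemma kernelGLoss_eq_Fg {𝓧 : Type*} [MeasurableSpace 𝓧]
    (κ : ProbabilityTheory.Kernel 𝓧 ℝ) (ν : Measure ℝ) (m : Measure 𝓧)
    (g : ℝ × 𝓧 → ℝ) : kernelGLoss κ ν m g = ∫⁻ x, Fg κ ν g x ∂m := rfl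

/-- (Proposition S5: generalization of the g-loss minimizer under covariate shift.) Let `κ` be
a Markov kernel from `𝒳` to `ℝ` (the common conditional outcome distribution), `ν` a
probability measure on `ℝ`, and `μ, μ'` probability measures on `𝒳` (training and evaluation
covariate distributions) with `μ' ≪ μ`. If a jointly measurable `g : ℝ × 𝒳 → (0,1)` minimizes
`L_μ` over all jointly measurable `(0,1)`-valued functions, then `g` also minimizes `L_{μ'}`:
the optimum learned on the training covariate space generalizes to any evaluation covariate
space covered by the training space, provided the conditional outcome distribution is
invariant (covariate shift). -/
theorem gloss_minimizer_generalizes_under_covariate_shift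
    {𝓧 : Type*} [MeasurableSpace 𝓧]
    (κ : ProbabilityTheory.Kernel 𝓧 ℝ) [ProbabilityTheory.IsMarkovKernel κ]
    (ν : Measure ℝ) [IsProbabilityMeasure ν]
    (μ μ' : Measure 𝓧) [IsProbabilityMeasure μ] [IsProbabilityMeasure μ']
    (hac : μ' ≪ μ)
    (g : ℝ × 𝓧 → ℝ) (hg : Measurable g) (hg01 : ∀ p, g p ∈ Set.Ioo (0 : ℝ) 1)
    (hmin : ∀ g' : ℝ × 𝓧 → ℝ, Measurable g' → (∀ p, g' p ∈ Set.Ioo (0 : ℝ) 1) →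
      kernelGLoss κ ν μ g ≤ kernelGLoss κ ν μ g') :
    ∀ g' : ℝ × 𝓧 → ℝ, Measurable g' → (∀ p, g' p ∈ Set.Ioo (0 : ℝ) 1) →
      kernelGLoss κ ν μ' g ≤ kernelGLoss κ ν μ' g' := by
  classical
  -- Step 1: L_μ g is finite, by comparing with the constant 1/2.
  have hhalf : ∀ t : ℝ, bce t (1/2) = Real.log 2 := by
    intro t
    simp only [bce]
    rw [show (1:ℝ) - 1/2 = 1/2 by norm_num, show (1:ℝ)/2 = 2⁻¹ by norm_num, Real.log_inv]
    ring
  have hFhalf : ∀ x : 𝓧, Fg κ ν (fun _ => 1/2) x = ENNReal.ofReal (Real.log 2) := by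
    intro x
    unfold Fg
    simp only [hhalf]
    rw [lintegral_const]
    simp [lintegral_const]
  have hLfin : kernelGLoss κ ν μ g ≠ ∞ := by
    have h1 : kernelGLoss κ ν μ g ≤ kernelGLoss κ ν μ (fun _ => 1/2) :=
      hmin _ measurable_const (fun _ => by norm_num)
    have h2 : kernelGLoss κ ν μ (fun _ => 1/2) = ENNReal.ofReal (Real.log 2) := by
      rw [kernelGLoss_eq_Fg]
      simp only [hFhalf]
      simp
    refine ne_top_of_le_ne_top ?_ h1
    rw [h2]
    exact ENNReal.ofReal_ne_top
  -- Step 2: μ-a.e. pointwise optimality of g.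
  have key : ∀ g' : ℝ × 𝓧 → ℝ, Measurable g' → (∀ p, g' p ∈ Set.Ioo (0 : ℝ) 1) →
      ∀ᵐ x ∂μ, Fg κ ν g x ≤ Fg κ ν g' x := by
    intro g' hg' hg'01
    by_contra hcon
    set A : Set 𝓧 := {x | Fg κ ν g' x < Fg κ ν g x} with hAdef
    have hA : MeasurableSet A :=
      measurableSet_lt (measurable_Fg κ ν hg') (measurable_Fg κ ν hg)
    have hApos : μ A ≠ 0 := by
      intro h0
      apply hcon
      rw [MeasureTheory.ae_iff]
      convert h0 using 2
      ext x
      simp [hAdef, not_le]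
    -- the switched function
    set g'' : ℝ × 𝓧 → ℝ := fun p => if p.2 ∈ A then g' p else g p with hg''def
    have hg''m : Measurable g'' :=
      Measurable.ite (hA.preimage measurable_snd) hg' hg
    have hg''01 : ∀ p, g'' p ∈ Set.Ioo (0:ℝ) 1 := by
      intro p; simp only [hg''def]; split_ifs; exacts [hg'01 p, hg01 p]
    have hFA : ∀ x ∈ A, Fg κ ν g'' x = Fg κ ν g' x := by
      intro x hx
      unfold Fg
      refine lintegral_congr fun z => lintegral_congr fun y => ?_
      simp [hg''def, hx]
    have hFAc : ∀ x ∈ Aᶜ, Fg κ ν g'' x = Fg κ ν g x := by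
      intro x hx
      unfold Fg
      refine lintegral_congr fun z => lintegral_congr fun y => ?_
      simp only [hg''def]
      rw [if_neg hx]
    have hsplit : ∀ h : 𝓧 → ℝ≥0∞,
        (∫⁻ x, h x ∂μ) = (∫⁻ x in A, h x ∂μ) + ∫⁻ x in Aᶜ, h x ∂μ := by
      intro h; rw [lintegral_add_compl _ hA]
    have hL'' : kernelGLoss κ ν μ g'' =
        (∫⁻ x in A, Fg κ ν g' x ∂μ) + ∫⁻ x in Aᶜ, Fg κ ν g x ∂μ := by
      rw [kernelGLoss_eq_Fg, hsplit (Fg κ ν g'')]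
      congr 1
      · exact setLIntegral_congr_fun hA hFA
      · exact setLIntegral_congr_fun hA.compl hFAc
    have hLg : kernelGLoss κ ν μ g =
        (∫⁻ x in A, Fg κ ν g x ∂μ) + ∫⁻ x in Aᶜ, Fg κ ν g x ∂μ := by
      rw [kernelGLoss_eq_Fg, hsplit (Fg κ ν g)]
    have hle := hmin g'' hg''m hg''01
    rw [hLg, hL''] at hle
    have hcfin : (∫⁻ x in Aᶜ, Fg κ ν g x ∂μ) ≠ ∞ := by
      refine ne_top_of_le_ne_top hLfin ?_
      rw [kernelGLoss_eq_Fg]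
      exact setLIntegral_le_lintegral _ _
    have hAle : (∫⁻ x in A, Fg κ ν g x ∂μ) ≤ ∫⁻ x in A, Fg κ ν g' x ∂μ :=
      ENNReal.le_of_add_le_add_right hcfin hle
    have hAfin2 : (∫⁻ x in A, Fg κ ν g x ∂μ) ≠ ∞ := by
      refine ne_top_of_le_ne_top hLfin ?_
      rw [kernelGLoss_eq_Fg]
      exact setLIntegral_le_lintegral _ _
    have hAfin : (∫⁻ x in A, Fg κ ν g' x ∂μ) ≠ ∞ := by
      have hmono : (∫⁻ x in A, Fg κ ν g' x ∂μ) ≤ ∫⁻ x in A, Fg κ ν g x ∂μ := by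
        refine lintegral_mono_ae ?_
        filter_upwards [ae_restrict_mem hA] with x hx
        exact le_of_lt hx
      exact ne_top_of_le_ne_top hAfin2 hmono
    have hstrict : (∫⁻ x in A, Fg κ ν g' x ∂μ) < ∫⁻ x in A, Fg κ ν g x ∂μ := by
      refine lintegral_strict_mono ?_ ((measurable_Fg κ ν hg).aemeasurable) hAfin ?_
      · simpa [Measure.restrict_eq_zero] using hApos
      · filter_upwards [ae_restrict_mem hA] with x hx
        exact hx
    exact lt_irrefl _ (lt_of_le_of_lt hAle hstrict)
  -- Step 3: transfer to μ'.
  intro g' hg' hg'01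
  rw [kernelGLoss_eq_Fg, kernelGLoss_eq_Fg]
  exact lintegral_mono_ae (hac.ae_le (key g' hg' hg'01))
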